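/- Let α = 0.9616 and define κ̂(ŝ) = 3(1 − ŝ)ŝ^3·ln(ŝ/(1 − ŝ)) / (α(ŝ^3 + 2)·ln((ŝ^3 + 2)/2)) + 1/5 for ŝ ∈ [1/2, 1). Then κ̂(ŝ) < 1 for all ŝ ∈ [1/2, 1). -/

import Mathlib

open Real

lemma log_lower_aux {x : ℝ} (h0 : 0 ≤ x) (h1 : x < 1) :
    2*x + 2*x^3/3 ≤ Real.log ((1+x)/(1-x)) := by
  set f : ℝ → ℝ := fun t => Real.log (1+t) - Real.log (1-t) - 2*t - 2*t^3/3 with hf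
  have hder : ∀ t ∈ Set.Ioo (-1:ℝ) 1, HasDerivAt f (2*t^4/(1-t^2)) t := by
    intro t ht
    obtain ⟨ht1, ht2⟩ := ht
    have h1t : (0:ℝ) < 1 + t := by linarith
    have h2t : (0:ℝ) < 1 - t := by linarith
    have d1 : HasDerivAt (fun t : ℝ => 1 + t) 1 t := by
      simpa using (hasDerivAt_id t).const_add (1:ℝ)
    have d2 : HasDerivAt (fun t : ℝ => 1 - t) (-1) t := by
      exact (hasDerivAt_id t).const_sub (1:ℝ)
    have dl1 : HasDerivAt (fun t : ℝ => Real.log (1+t)) (1/(1+t)) t := d1.log (by linarith)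
    have dl2 : HasDerivAt (fun t : ℝ => Real.log (1-t)) ((-1)/(1-t)) t := d2.log (by linarith)
    have d3 : HasDerivAt (fun t : ℝ => 2*t) 2 t := by
      simpa using (hasDerivAt_id t).const_mul (2:ℝ)
    have d4 : HasDerivAt (fun t : ℝ => 2*t^3/3) (2*(3*t^2)/3) t := by
      simpa using ((hasDerivAt_pow 3 t).const_mul (2:ℝ)).div_const (3:ℝ)
    have h3t : (1:ℝ) - t^2 ≠ 0 := by nlinarith
    have := ((dl1.sub dl2).sub d3).sub d4
    refine this.congr_deriv ?_
    field_simp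
    ring
  have key : MonotoneOn f (Set.Ico (0:ℝ) 1) := by
    apply monotoneOn_of_deriv_nonneg (convex_Ico 0 1)
    · intro t ht
      exact (hder t ⟨by linarith [ht.1], ht.2⟩).continuousAt.continuousWithinAt
    · intro t ht
      rw [interior_Ico] at ht
      exact (hder t ⟨by linarith [ht.1], ht.2⟩).differentiableAt.differentiableWithinAt
    · intro t ht
      rw [interior_Ico] at ht
      obtain ⟨ht1, ht2⟩ := ht
      rw [(hder t ⟨by linarith, ht2⟩).deriv]
      have : (0:ℝ) < 1 - t^2 := by nlinarith
      positivity
  have h := key (Set.left_mem_Ico.2 one_pos) ⟨h0, h1⟩ h0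
  rw [Real.log_div (by linarith) (by linarith)]
  simp only [hf] at h
  norm_num at h
  linarith

lemma log_upper_aux {x : ℝ} (h0 : 0 ≤ x) (h1 : x < 1) :
    Real.log ((1+x)/(1-x)) ≤ 2*x + 2*x^3/3 + 2*x^5/(5*(1-x^2)) := by
  set f : ℝ → ℝ := fun t => 2*t + 2*t^3/3 + 2*t^5/(5*(1-t^2))
      - Real.log (1+t) + Real.log (1-t) with hf
  have hder : ∀ t ∈ Set.Ioo (-1:ℝ) 1, HasDerivAt f (4*t^6/(5*(1-t^2)^2)) t := by
    intro t ht
    obtain ⟨ht1, ht2⟩ := ht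
    have h1t : (0:ℝ) < 1 + t := by linarith
    have h2t : (0:ℝ) < 1 - t := by linarith
    have h3t : (0:ℝ) < 1 - t^2 := by nlinarith
    have d1 : HasDerivAt (fun t : ℝ => 1 + t) 1 t := by
      simpa using (hasDerivAt_id t).const_add (1:ℝ)
    have d2 : HasDerivAt (fun t : ℝ => 1 - t) (-1) t := by
      exact (hasDerivAt_id t).const_sub (1:ℝ)
    have dl1 : HasDerivAt (fun t : ℝ => Real.log (1+t)) (1/(1+t)) t := d1.log (by linarith)
    have dl2 : HasDerivAt (fun t : ℝ => Real.log (1-t)) ((-1)/(1-t)) t := d2.log (by linarith)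
    have d3 : HasDerivAt (fun t : ℝ => 2*t) 2 t := by
      simpa using (hasDerivAt_id t).const_mul (2:ℝ)
    have d4 : HasDerivAt (fun t : ℝ => 2*t^3/3) (2*(3*t^2)/3) t := by
      simpa using ((hasDerivAt_pow 3 t).const_mul (2:ℝ)).div_const (3:ℝ)
    have dnum : HasDerivAt (fun t : ℝ => 2*t^5) (2*(5*t^4)) t := by
      simpa using (hasDerivAt_pow 5 t).const_mul (2:ℝ)
    have dden : HasDerivAt (fun t : ℝ => 5*(1-t^2)) (5*(-(2*t))) t := by
      have : HasDerivAt (fun t : ℝ => 1 - t^2) (-(2*t)) t := by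
        exact ((hasDerivAt_pow 2 t).const_sub (1:ℝ)).congr_deriv (by norm_num)
      simpa using this.const_mul (5:ℝ)
    have d5 : HasDerivAt (fun t : ℝ => 2*t^5/(5*(1-t^2)))
        ((2*(5*t^4)*(5*(1-t^2)) - 2*t^5*(5*(-(2*t))))/(5*(1-t^2))^2) t :=
      dnum.div dden (by positivity)
    have := (((d3.add d4).add d5).sub dl1).add dl2
    refine this.congr_deriv ?_
    field_simp
    ring
  have key : MonotoneOn f (Set.Ico (0:ℝ) 1) := by
    apply monotoneOn_of_deriv_nonneg (convex_Ico 0 1)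
    · intro t ht
      exact (hder t ⟨by linarith [ht.1], ht.2⟩).continuousAt.continuousWithinAt
    · intro t ht
      rw [interior_Ico] at ht
      exact (hder t ⟨by linarith [ht.1], ht.2⟩).differentiableAt.differentiableWithinAt
    · intro t ht
      rw [interior_Ico] at ht
      obtain ⟨ht1, ht2⟩ := ht
      rw [(hder t ⟨by linarith, ht2⟩).deriv]
      have : (0:ℝ) < 1 - t^2 := by nlinarith
      positivity
  have h := key (Set.left_mem_Ico.2 one_pos) ⟨h0, h1⟩ h0
  rw [Real.log_div (by linarith) (by linarith)]
  simp only [hf] at h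
  norm_num at h
  linarith

open Real

set_option maxHeartbeats 1000000 in
/-- amortized decay rate bound, case `d = 4`, `d₂ = 1`. -/
theorem kappa_d2_one_lt_one :
    ∀ s : ℝ, 1 / 2 ≤ s → s < 1 →
      3 * (1 - s) * s ^ 3 * Real.log (s / (1 - s)) /
        ((0.9616 : ℝ) * (s ^ 3 + 2) * Real.log ((s ^ 3 + 2) / 2)) + 1 / 5 < 1 := by
  intro s hlo h1
  have hs : (0:ℝ) < s := by linarith
  have h1s : (0:ℝ) < 1 - s := by linarith
  have hs1 : s ≤ 1 := le_of_lt h1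
  have hs0 : (0:ℝ) ≤ s := le_of_lt hs
  have hA : (0:ℝ) < s^3 + 4 := by positivity
  -- the upper bound on the first log
  have hu0 : (0:ℝ) ≤ 2*s - 1 := by linarith
  have hu1 : 2*s - 1 < 1 := by linarith
  have hlog1 : Real.log (s/(1-s)) ≤
      2*(2*s-1) + 2*(2*s-1)^3/3 + 2*(2*s-1)^5/(5*(1-(2*s-1)^2)) := by
    have h := log_upper_aux hu0 hu1
    rw [show (1+(2*s-1))/(1-(2*s-1)) = s/(1-s) by
      rw [show 1+(2*s-1) = 2*s by ring, show 1-(2*s-1) = 2*(1-s) by ring,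
        mul_div_mul_left _ _ (two_ne_zero)]] at h
    exact h
  -- the lower bound on the second log
  have hv0 : (0:ℝ) ≤ s^3/(s^3+4) := by positivity
  have hv1 : s^3/(s^3+4) < 1 := by
    rw [div_lt_one hA]; linarith
  have hV0 : (0:ℝ) < s^3/(s^3+4) := div_pos (by positivity) hA
  have hlog2 : 2*(s^3/(s^3+4)) + 2*(s^3/(s^3+4))^3/3 ≤ Real.log ((s^3+2)/2) := by
    have h := log_lower_aux hv0 hv1
    rw [show (1+s^3/(s^3+4))/(1-s^3/(s^3+4)) = (s^3+2)/2 by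
      rw [div_eq_div_iff (ne_of_gt (sub_pos.2 hv1)) (by norm_num)]
      field_simp
      ring] at h
    exact h
  have hlog2' : 2*(s^3/(s^3+4)) ≤ Real.log ((s^3+2)/2) := by
    nlinarith [pow_nonneg hv0 3]
  have hL2pos : (0:ℝ) < Real.log ((s^3+2)/2) := lt_of_lt_of_le (by linarith) hlog2'
  have hB : (0:ℝ) < (0.9616:ℝ) * (s^3 + 2) * Real.log ((s^3+2)/2) := by
    apply mul_pos (mul_pos (by norm_num) (by positivity)) hL2pos
  -- the polynomial certificate
  have hR : (1:ℝ) ≤ ((313885369362121521433898893106995583744401:ℝ)/156250000000000000000000000000000000000000) + ((684774935542526577715708341864612999:ℝ)/15625000000000000000000000000000000)*s^1 + ((-37485080158332578082922210399:ℝ)/1562500000000000000000000000)*s^2 + ((4035230506099613047799:ℝ)/156250000000000000000)*s^3 + ((167673638874801:ℝ)/15625000000000)*s^4 + ((-9557401:ℝ)/1562500)*s^5 + ((32:ℝ)/5)*s^6 := by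
    nlinarith [mul_nonneg hs0 (sub_nonneg.2 hs1), mul_nonneg (mul_nonneg hs0 hs0) (sub_nonneg.2 hs1),
      mul_nonneg (mul_nonneg (mul_nonneg hs0 hs0) hs0) (sub_nonneg.2 hs1),
      mul_nonneg (mul_nonneg (mul_nonneg (mul_nonneg hs0 hs0) hs0) hs0) (sub_nonneg.2 hs1),
      mul_nonneg (mul_nonneg (mul_nonneg (mul_nonneg (mul_nonneg hs0 hs0) hs0) hs0) hs0) (sub_nonneg.2 hs1),
      sq_nonneg s, sq_nonneg (s - 1/2), hlo]
  have hq1 : (0:ℝ) ≤ s^2 - ((15442599:ℝ)/10000000)*s + ((5973525:ℝ)/10000000) := by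
    nlinarith [sq_nonneg (s - ((15442599:ℝ)/20000000))]
  have hQ : (0:ℝ) < ((6:ℝ)/5) + ((72116:ℝ)/3125)*s^1 + (-80:ℝ)*s^2 + ((963:ℝ)/10)*s^3 + ((-179567:ℝ)/3125)*s^4 + ((28:ℝ)/5)*s^5 + (24:ℝ)*s^6 + (-16:ℝ)*s^7 + ((32:ℝ)/5)*s^8 := by
    nlinarith [mul_nonneg hq1 (sub_nonneg.2 hR), sq_nonneg (s - ((15442599:ℝ)/20000000)), hlo, hs1]
  -- the key rational inequality
  have key : 3*(1-s)*s^3*(2*(2*s-1) + 2*(2*s-1)^3/3 + 2*(2*s-1)^5/(5*(1-(2*s-1)^2)))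
      < 4/5 * ((0.9616:ℝ) * (s^3+2) * (2*(s^3/(s^3+4)))) := by
    have hne : (1:ℝ)-(2*s-1)^2 ≠ 0 := ne_of_gt (by nlinarith)
    have e3 : 3*(1-s)*s^3*(2*(2*s-1) + 2*(2*s-1)^3/3 + 2*(2*s-1)^5/(5*(1-(2*s-1)^2)))
        = 3*(1-s)*s^3*(2*(2*s-1) + 2*(2*s-1)^3/3) + 3/10*s^2*(2*s-1)^5 := by
      rw [show (1:ℝ)-(2*s-1)^2 = 4*s*(1-s) by ring]
      field_simp
      ring
    have e4 : 4/5 * ((0.9616:ℝ) * (s^3+2) * (2*(s^3/(s^3+4))))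
        = (192320:ℝ)/125000*((s^3+2)*s^3)/(s^3+4) := by
      rw [eq_div_iff (ne_of_gt hA)]
      field_simp
      ring
    rw [e3, e4, lt_div_iff₀ hA]
    nlinarith [mul_pos (pow_pos hs 2) hQ]
  -- put everything together
  have hnum : 3*(1-s)*s^3 * Real.log (s/(1-s))
      ≤ 3*(1-s)*s^3*(2*(2*s-1) + 2*(2*s-1)^3/3 + 2*(2*s-1)^5/(5*(1-(2*s-1)^2))) :=
    mul_le_mul_of_nonneg_left hlog1 (by positivity)
  have hden : 4/5 * ((0.9616:ℝ) * (s^3+2) * (2*(s^3/(s^3+4))))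
      ≤ 4/5 * ((0.9616:ℝ) * (s^3 + 2) * Real.log ((s^3+2)/2)) := by
    have hc : (0:ℝ) ≤ 4/5 * ((0.9616:ℝ) * (s^3+2)) := by positivity
    nlinarith [mul_le_mul_of_nonneg_left hlog2' hc]
  have hdiv : 3 * (1 - s) * s ^ 3 * Real.log (s / (1 - s)) /
      ((0.9616 : ℝ) * (s ^ 3 + 2) * Real.log ((s ^ 3 + 2) / 2)) < 4/5 := by
    rw [div_lt_iff₀ hB]
    calc 3 * (1 - s) * s ^ 3 * Real.log (s / (1 - s))
        ≤ 3*(1-s)*s^3*(2*(2*s-1) + 2*(2*s-1)^3/3 + 2*(2*s-1)^5/(5*(1-(2*s-1)^2))) := hnum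
      _ < 4/5 * ((0.9616:ℝ) * (s^3+2) * (2*(s^3/(s^3+4)))) := key
      _ ≤ 4/5 * ((0.9616:ℝ) * (s^3 + 2) * Real.log ((s^3+2)/2)) := hden
  linarith
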